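/- Fix ε₀ > 0 sufficiently small and set α := 1 + ε₀ and ε₁ := ε₀²/18. Define λ_q := ⌊λ₀^{α^q}⌋, δ_q := λ_q^{−2/5+2ε₀}, μ_{q+1} := δ_q^{1/4} δ_{q+1}^{1/4} λ_q^{1/2} λ_{q+1}^{1/2}, and ℓ_{q+1} := λ_{q+1}^{−1+ε₁}. Then there exists a constant C such that for all sufficiently large λ₀ and all q ∈ ℕ: δ_{q+1}^{1/2} μ_{q+1} ℓ_{q+1} λ_{q+1}^{2ε₁} ≤ C λ_q^{−2/5 + (6/5)ε₀ + (5/3)ε₀² + (1/6)ε₀³} ≤ C δ_{q+2} λ_q^{−ε₀²}; in particular, for λ₀ sufficiently large, δ_{q+1}^{1/2} μ_{q+1} ℓ_{q+1} λ_{q+1}^{2ε₁} ≤ δ_{q+2} for all q. -/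
import Mathlib


open scoped BigOperators

noncomputable section

/-- `λ_q := ⌊λ₀^{(1+ε₀)^q}⌋`. -/
def lamP (l₀ ε₀ : ℝ) (q : ℕ) : ℝ := ((⌊l₀ ^ ((1 + ε₀) ^ q)⌋ : ℤ) : ℝ)

/-- `δ_q := λ_q^{−2/5+2ε₀}`. -/
def delP (l₀ ε₀ : ℝ) (q : ℕ) : ℝ := lamP l₀ ε₀ q ^ (-(2 : ℝ)/5 + 2 * ε₀)

/-- `μ_{q+1} := δ_q^{1/4} δ_{q+1}^{1/4} λ_q^{1/2} λ_{q+1}^{1/2}`. -/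
def muS (l₀ ε₀ : ℝ) (q : ℕ) : ℝ :=
  delP l₀ ε₀ q ^ ((1 : ℝ)/4) * delP l₀ ε₀ (q + 1) ^ ((1 : ℝ)/4)
    * lamP l₀ ε₀ q ^ ((1 : ℝ)/2) * lamP l₀ ε₀ (q + 1) ^ ((1 : ℝ)/2)

/-- `ℓ_{q+1} := λ_{q+1}^{−1+ε₁}` with `ε₁ = ε₀²/18`. -/
def ellS (l₀ ε₀ : ℝ) (q : ℕ) : ℝ := lamP l₀ ε₀ (q + 1) ^ (-(1 : ℝ) + ε₀ ^ 2 / 18)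

/-- Combine a product of real powers of two positive bases. -/
lemma rpow_prod_eq (x y : ℝ) (hx : 0 < x) (hy : 0 < y) (a b c d e f g : ℝ) :
    y ^ a * (x ^ b * y ^ c * x ^ d * y ^ e) * y ^ f * y ^ g
      = x ^ (b + d) * y ^ (a + c + e + f + g) := by
  rw [Real.rpow_add hx, Real.rpow_add hy, Real.rpow_add hy, Real.rpow_add hy,
    Real.rpow_add hy]
  ring

/-- The abstract core estimate: all exponents are opaque real parameters. -/
lemma core_est (x y z α p β c A e a1 E ε2 : ℝ)
    (hx1 : 1 ≤ x) (hy0 : 0 < y) (hz0 : 0 < z)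
    (hβ : β < 0) (hAneg : A < 0) (hA1 : (-1 : ℝ) ≤ A) (he1 : (-1 : ℝ) ≤ e)
    (hc : 0 < c) (hε2 : 0 ≤ ε2)
    (hxy : x ^ α ≤ 2 * y)
    (hzx : z ≤ (2 * x) ^ p)
    (hxM : (4 : ℝ) ^ (1/c) ≤ x)
    (hEeq : a1 + α * A = E)
    (hep : e = p * β)
    (hEec : E = e + -ε2 + -c) :
    x ^ a1 * y ^ A ≤ 2 * x ^ E ∧
    2 * x ^ E ≤ 2 * (z ^ β * x ^ (-ε2)) ∧
    x ^ a1 * y ^ A ≤ z ^ β := by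
  have hx0 : (0 : ℝ) < x := lt_of_lt_of_le one_pos hx1
  -- bound y^A by a power of x
  have hyA : y ^ A ≤ 2 * x ^ (α * A) := by
    have hxα : (0 : ℝ) < x ^ α / 2 := by positivity
    have h1 : x ^ α / 2 ≤ y := by linarith
    have h2 : y ^ A ≤ (x ^ α / 2) ^ A :=
      Real.rpow_le_rpow_of_nonpos hxα h1 hAneg.le
    have h3 : (x ^ α / 2) ^ A = x ^ (α * A) / 2 ^ A := by
      rw [Real.div_rpow (by positivity) (by norm_num), ← Real.rpow_mul hx0.le]
    have h4 : (1 : ℝ)/2 ≤ (2 : ℝ) ^ A := by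
      have h := Real.rpow_le_rpow_of_exponent_le one_le_two hA1
      rw [Real.rpow_neg_one] at h
      linarith
    have h5 : x ^ (α * A) / 2 ^ A ≤ 2 * x ^ (α * A) := by
      calc x ^ (α * A) / 2 ^ A ≤ x ^ (α * A) / (1/2) :=
            div_le_div_of_nonneg_left (Real.rpow_nonneg hx0.le _) (by norm_num) h4
        _ = 2 * x ^ (α * A) := by ring
    calc y ^ A ≤ (x ^ α / 2) ^ A := h2
      _ = x ^ (α * A) / 2 ^ A := h3
      _ ≤ 2 * x ^ (α * A) := h5
  -- first inequality
  have h1 : x ^ a1 * y ^ A ≤ 2 * x ^ E := by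
    calc x ^ a1 * y ^ A ≤ x ^ a1 * (2 * x ^ (α * A)) :=
          mul_le_mul_of_nonneg_left hyA (Real.rpow_nonneg hx0.le _)
      _ = 2 * x ^ (a1 + α * A) := by rw [Real.rpow_add hx0]; ring
      _ = 2 * x ^ E := by rw [hEeq]
  -- lower bound for z^β
  have hzβ : (1 : ℝ)/2 * x ^ e ≤ z ^ β := by
    have hz1 : ((2 * x) ^ p) ^ β ≤ z ^ β :=
      Real.rpow_le_rpow_of_nonpos hz0 hzx hβ.le
    have hz2 : ((2 * x) ^ p) ^ β = 2 ^ e * x ^ e := by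
      rw [← Real.rpow_mul (by positivity : (0 : ℝ) ≤ 2 * x), ← hep,
        Real.mul_rpow (by norm_num) hx0.le]
    have hz3 : (1 : ℝ)/2 ≤ (2 : ℝ) ^ e := by
      have h := Real.rpow_le_rpow_of_exponent_le one_le_two he1
      rw [Real.rpow_neg_one] at h
      linarith
    calc (1 : ℝ)/2 * x ^ e ≤ 2 ^ e * x ^ e :=
          mul_le_mul_of_nonneg_right hz3 (Real.rpow_nonneg hx0.le _)
      _ = ((2 * x) ^ p) ^ β := hz2.symm
      _ ≤ z ^ β := hz1
  -- the smallness coming from x being large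
  have hxc : x ^ (-c) ≤ 1/4 := by
    have hh1 : x ^ (-c) ≤ ((4 : ℝ) ^ (1/c)) ^ (-c) :=
      Real.rpow_le_rpow_of_nonpos (by positivity) hxM (neg_nonpos.mpr hc.le)
    have hh2 : ((4 : ℝ) ^ (1/c)) ^ (-c) = (4 : ℝ) ^ (1/c * -c) :=
      (Real.rpow_mul (by norm_num) _ _).symm
    have hh3 : 1/c * -c = (-1 : ℝ) := by field_simp
    rw [hh2, hh3, Real.rpow_neg_one] at hh1
    norm_num at hh1
    linarith
  -- second inequality
  have h2 : x ^ E ≤ z ^ β * x ^ (-ε2) := by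
    have hs : x ^ E = x ^ e * x ^ (-ε2) * x ^ (-c) := by
      rw [← Real.rpow_add hx0, ← Real.rpow_add hx0, hEec]
    have ha := Real.rpow_nonneg hx0.le e
    have hb := Real.rpow_nonneg hx0.le (-ε2)
    calc x ^ E = x ^ e * x ^ (-ε2) * x ^ (-c) := hs
      _ ≤ x ^ e * x ^ (-ε2) * (1/4) :=
          mul_le_mul_of_nonneg_left hxc (mul_nonneg ha hb)
      _ ≤ (1 : ℝ)/2 * x ^ e * x ^ (-ε2) := by nlinarith
      _ ≤ z ^ β * x ^ (-ε2) := mul_le_mul_of_nonneg_right hzβ hb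
  -- third inequality
  have h3 : x ^ a1 * y ^ A ≤ z ^ β := by
    have hmon : x ^ (-ε2 + -c) ≤ x ^ (-c) :=
      Real.rpow_le_rpow_of_exponent_le hx1 (by linarith)
    have hsm : x ^ (-ε2 + -c) ≤ 1/4 := hmon.trans hxc
    have hnn := Real.rpow_nonneg hx0.le e
    calc x ^ a1 * y ^ A ≤ 2 * x ^ E := h1
      _ = 2 * (x ^ e * x ^ (-ε2 + -c)) := by
          rw [← Real.rpow_add hx0, hEec]; ring_nf
      _ ≤ 2 * (x ^ e * (1/4)) := by
          have := mul_le_mul_of_nonneg_left hsm hnn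
          linarith
      _ = (1 : ℝ)/2 * x ^ e := by ring
      _ ≤ z ^ β := hzβ
  exact ⟨h1, by linarith, h3⟩

/-- **The key smallness estimate for the Reynolds stress** (Section 7 of the paper):
`δ_{q+1}^{1/2} μ_{q+1} ℓ_{q+1} λ_{q+1}^{2ε₁}
  ≤ C λ_q^{−2/5 + (6/5)ε₀ + (5/3)ε₀² + (1/6)ε₀³} ≤ C δ_{q+2} λ_q^{−ε₀²}`;
in particular, for `λ₀` sufficiently large, the left-hand side is `≤ δ_{q+2}`. -/
theorem reynolds_smallness :
    ∃ ε' : ℝ, 0 < ε' ∧ ∀ ε₀ : ℝ, 0 < ε₀ → ε₀ < ε' →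
    ∃ C : ℝ, 0 < C ∧ ∃ Λ₀ : ℝ, ∀ l₀ : ℝ, Λ₀ ≤ l₀ → ∀ q : ℕ,
      delP l₀ ε₀ (q + 1) ^ ((1 : ℝ)/2) * muS l₀ ε₀ q * ellS l₀ ε₀ q
          * lamP l₀ ε₀ (q + 1) ^ (2 * (ε₀ ^ 2 / 18))
        ≤ C * lamP l₀ ε₀ q
            ^ (-(2 : ℝ)/5 + 6/5 * ε₀ + 5/3 * ε₀ ^ 2 + 1/6 * ε₀ ^ 3) ∧
      C * lamP l₀ ε₀ q ^ (-(2 : ℝ)/5 + 6/5 * ε₀ + 5/3 * ε₀ ^ 2 + 1/6 * ε₀ ^ 3)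
        ≤ C * (delP l₀ ε₀ (q + 2) * lamP l₀ ε₀ q ^ (-(ε₀ ^ 2))) ∧
      delP l₀ ε₀ (q + 1) ^ ((1 : ℝ)/2) * muS l₀ ε₀ q * ellS l₀ ε₀ q
          * lamP l₀ ε₀ (q + 1) ^ (2 * (ε₀ ^ 2 / 18))
        ≤ delP l₀ ε₀ (q + 2) := by
  refine ⟨1/10, by norm_num, fun ε₀ hε hε' => ?_⟩
  refine ⟨2, by norm_num,
    (4 : ℝ) ^ (1 / (14/15 * ε₀ ^ 2 + 11/6 * ε₀ ^ 3)) + 3, fun l₀ hl q => ?_⟩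
  have hcpos : (0 : ℝ) < 14/15 * ε₀ ^ 2 + 11/6 * ε₀ ^ 3 := by positivity
  have hM1 : (1 : ℝ) ≤ (4 : ℝ) ^ (1 / (14/15 * ε₀ ^ 2 + 11/6 * ε₀ ^ 3)) :=
    Real.one_le_rpow (by norm_num) (by positivity)
  have hl4 : (4 : ℝ) ≤ l₀ := by linarith
  have hl0 : (0 : ℝ) < l₀ := by linarith
  have hl1 : (1 : ℝ) ≤ l₀ := by linarith
  have hα : (1 : ℝ) ≤ 1 + ε₀ := by linarith
  have hLl : ∀ r : ℕ, l₀ ≤ l₀ ^ ((1 + ε₀) ^ r) := by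
    intro r
    calc l₀ = l₀ ^ (1 : ℝ) := (Real.rpow_one _).symm
      _ ≤ l₀ ^ ((1 + ε₀) ^ r) :=
          Real.rpow_le_rpow_of_exponent_le hl1 (one_le_pow₀ hα)
  have hfl : ∀ r : ℕ, lamP l₀ ε₀ r ≤ l₀ ^ ((1 + ε₀) ^ r) := fun r => Int.floor_le _
  have hlb : ∀ r : ℕ, l₀ - 1 ≤ lamP l₀ ε₀ r := by
    intro r
    have h := Int.lt_floor_add_one (l₀ ^ ((1 + ε₀) ^ r))
    have h2 := hLl r
    simp only [lamP]
    linarith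
  have hx1 : ∀ r : ℕ, (1 : ℝ) ≤ lamP l₀ ε₀ r := fun r => by have := hlb r; linarith
  have hx0 : ∀ r : ℕ, (0 : ℝ) < lamP l₀ ε₀ r := fun r => lt_of_lt_of_le one_pos (hx1 r)
  have hup : ∀ r : ℕ, l₀ ^ ((1 + ε₀) ^ r) ≤ 2 * lamP l₀ ε₀ r := by
    intro r
    have h := Int.lt_floor_add_one (l₀ ^ ((1 + ε₀) ^ r))
    have h1 := hx1 r
    simp only [lamP] at h1 ⊢
    linarith
  have hxy : lamP l₀ ε₀ q ^ (1 + ε₀) ≤ 2 * lamP l₀ ε₀ (q + 1) := by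
    have e1 : l₀ ^ ((1 + ε₀) ^ (q + 1)) = (l₀ ^ ((1 + ε₀) ^ q)) ^ (1 + ε₀) := by
      rw [pow_succ, Real.rpow_mul hl0.le]
    calc lamP l₀ ε₀ q ^ (1 + ε₀) ≤ (l₀ ^ ((1 + ε₀) ^ q)) ^ (1 + ε₀) :=
          Real.rpow_le_rpow (hx0 q).le (hfl q) (by linarith)
      _ = l₀ ^ ((1 + ε₀) ^ (q + 1)) := e1.symm
      _ ≤ 2 * lamP l₀ ε₀ (q + 1) := hup (q + 1)
  have hzx : lamP l₀ ε₀ (q + 2) ≤ (2 * lamP l₀ ε₀ q) ^ ((1 + ε₀) ^ 2) := by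
    have e2 : l₀ ^ ((1 + ε₀) ^ (q + 2)) = (l₀ ^ ((1 + ε₀) ^ q)) ^ ((1 + ε₀) ^ 2) := by
      rw [pow_add, Real.rpow_mul hl0.le]
    calc lamP l₀ ε₀ (q + 2) ≤ l₀ ^ ((1 + ε₀) ^ (q + 2)) := hfl (q + 2)
      _ = (l₀ ^ ((1 + ε₀) ^ q)) ^ ((1 + ε₀) ^ 2) := e2
      _ ≤ (2 * lamP l₀ ε₀ q) ^ ((1 + ε₀) ^ 2) :=
          Real.rpow_le_rpow (by positivity) (hup q) (by positivity)
  have hxM : (4 : ℝ) ^ (1 / (14/15 * ε₀ ^ 2 + 11/6 * ε₀ ^ 3)) ≤ lamP l₀ ε₀ q := by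
    have := hlb q; linarith
  have H := core_est (lamP l₀ ε₀ q) (lamP l₀ ε₀ (q + 1)) (lamP l₀ ε₀ (q + 2))
    (1 + ε₀) ((1 + ε₀) ^ 2) (-(2 : ℝ)/5 + 2 * ε₀)
    (14/15 * ε₀ ^ 2 + 11/6 * ε₀ ^ 3)
    ((-(2 : ℝ)/5 + 2 * ε₀) * ((1 : ℝ)/2) + (-(2 : ℝ)/5 + 2 * ε₀) * ((1 : ℝ)/4)
      + (1 : ℝ)/2 + (-(1 : ℝ) + ε₀ ^ 2 / 18) + 2 * (ε₀ ^ 2 / 18))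
    ((1 + ε₀) ^ 2 * (-(2 : ℝ)/5 + 2 * ε₀))
    ((-(2 : ℝ)/5 + 2 * ε₀) * ((1 : ℝ)/4) + (1 : ℝ)/2)
    (-(2 : ℝ)/5 + 6/5 * ε₀ + 5/3 * ε₀ ^ 2 + 1/6 * ε₀ ^ 3)
    (ε₀ ^ 2)
    (hx1 q) (hx0 (q + 1)) (hx0 (q + 2))
    (by nlinarith) (by nlinarith) (by nlinarith) (by nlinarith)
    hcpos (by positivity)
    hxy hzx hxM
    (by ring) (by ring) (by ring)
  obtain ⟨H1, H2, H3⟩ := H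
  have key : delP l₀ ε₀ (q + 1) ^ ((1 : ℝ)/2) * muS l₀ ε₀ q * ellS l₀ ε₀ q
        * lamP l₀ ε₀ (q + 1) ^ (2 * (ε₀ ^ 2 / 18))
      = lamP l₀ ε₀ q ^ ((-(2 : ℝ)/5 + 2 * ε₀) * ((1 : ℝ)/4) + (1 : ℝ)/2)
        * lamP l₀ ε₀ (q + 1)
          ^ ((-(2 : ℝ)/5 + 2 * ε₀) * ((1 : ℝ)/2) + (-(2 : ℝ)/5 + 2 * ε₀) * ((1 : ℝ)/4)
            + (1 : ℝ)/2 + (-(1 : ℝ) + ε₀ ^ 2 / 18) + 2 * (ε₀ ^ 2 / 18)) := by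
    simp only [delP, muS, ellS]
    simp only [← Real.rpow_mul (hx0 (q + 1)).le, ← Real.rpow_mul (hx0 q).le]
    rw [rpow_prod_eq _ _ (hx0 q) (hx0 (q + 1))]
  refine ⟨?_, ?_, ?_⟩
  · rw [key]; exact H1
  · simp only [delP]; exact H2
  · rw [key]; simp only [delP]; exact H3
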